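/- Let Θ(ε) ∈ ℝ^{d×d} be as in the main theorem (Θ(ε) = B diag(arcsin((ε/r)ω_i√(1−ε²ω_i²/(4r²)))) B⁻¹ with Ω = B diag(ω_i) B⁻¹ real diagonalizable, all ω_i ≠ 0, r ∈ ℝ*). Suppose sin((b−a)Ω/(2r)) is invertible. Let n(ε) = ⌊(t−a)/(2ε)⌋ and M(ε) = (b−a)/ε with M(ε) even integer along a sequence ε → 0. Then cot((M(ε)/2)Θ(ε)) → cot((b−a)Ω/(2r)) and cosec((M(ε)/2)Θ(ε)) → cosec((b−a)Ω/(2r)) as ε → 0 (in matrix norm), where cot(X) = cos(X)(sin(X))⁻¹ and cosec(X) = (sin(X))⁻¹ whenever sin(X) is invertible. -/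

import Mathlib

open Matrix Filter Topology

/-- Matrix cosine of a real matrix, by power series. -/
noncomputable def mcosR {d : ℕ} (M : Matrix (Fin d) (Fin d) ℝ) : Matrix (Fin d) (Fin d) ℝ :=
  ∑' n : ℕ, (((-1 : ℝ) ^ n / ((2 * n).factorial : ℝ))) • M ^ (2 * n)

/-- Matrix sine of a real matrix, by power series. -/
noncomputable def msinR {d : ℕ} (M : Matrix (Fin d) (Fin d) ℝ) : Matrix (Fin d) (Fin d) ℝ :=
  ∑' n : ℕ, (((-1 : ℝ) ^ n / ((2 * n + 1).factorial : ℝ))) • M ^ (2 * n + 1)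

/-- The continuous linear map `v ↦ B * diagonal v * B⁻¹`. -/
noncomputable def conjL {d : ℕ} (B : Matrix (Fin d) (Fin d) ℝ) :
    (Fin d → ℝ) →L[ℝ] Matrix (Fin d) (Fin d) ℝ :=
  LinearMap.toContinuousLinearMap
    ((LinearMap.mulRight ℝ B⁻¹).comp
      ((LinearMap.mulLeft ℝ B).comp (Matrix.diagonalLinearMap (Fin d) ℝ ℝ)))

@[simp] lemma conjL_apply {d : ℕ} (B : Matrix (Fin d) (Fin d) ℝ) (v : Fin d → ℝ) :
    conjL B v = B * Matrix.diagonal v * B⁻¹ := by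
  simp [conjL, Matrix.diagonalLinearMap, Matrix.diagonalAddMonoidHom, Matrix.mul_assoc]

lemma myConj_pow {d : ℕ} {B : Matrix (Fin d) (Fin d) ℝ} (hB : IsUnit B.det)
    (v : Fin d → ℝ) (k : ℕ) :
    (B * Matrix.diagonal v * B⁻¹) ^ k = B * Matrix.diagonal (fun i => v i ^ k) * B⁻¹ := by
  induction k with
  | zero => simp [Matrix.diagonal_one, Matrix.mul_nonsing_inv B hB]
  | succ k ih =>
      rw [pow_succ, ih]
      have h1 : B⁻¹ * B = 1 := Matrix.nonsing_inv_mul B hB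
      calc B * Matrix.diagonal (fun i => v i ^ k) * B⁻¹ * (B * Matrix.diagonal v * B⁻¹)
          = B * (Matrix.diagonal (fun i => v i ^ k) * (B⁻¹ * B) * Matrix.diagonal v) * B⁻¹ := by
            simp only [Matrix.mul_assoc]
        _ = B * Matrix.diagonal (fun i => v i ^ (k + 1)) * B⁻¹ := by
            rw [h1, Matrix.mul_one, Matrix.diagonal_mul_diagonal]
            rw [show (fun i => v i ^ k * v i) = (fun i => v i ^ (k + 1)) from
              funext fun i => (pow_succ (v i) k).symm]

/-- Conjugated power-series evaluation. -/
lemma conj_tsum {d : ℕ} {B : Matrix (Fin d) (Fin d) ℝ} (hB : IsUnit B.det)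
    (v : Fin d → ℝ) (g : ℕ → ℝ) (e : ℕ → ℕ) (s : ℝ → ℝ)
    (hs : ∀ x : ℝ, HasSum (fun n : ℕ => g n * x ^ e n) (s x)) :
    ∑' n : ℕ, g n • (B * Matrix.diagonal v * B⁻¹) ^ e n
      = B * Matrix.diagonal (fun i => s (v i)) * B⁻¹ := by
  have hv : HasSum (fun n : ℕ => (fun i => g n * v i ^ e n : Fin d → ℝ))
      (fun i => s (v i)) := Pi.hasSum.2 fun i => hs (v i)
  have hL := hv.mapL (conjL B)
  have hL' : HasSum (fun n : ℕ => g n • (B * Matrix.diagonal v * B⁻¹) ^ e n)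
      (B * Matrix.diagonal (fun i => s (v i)) * B⁻¹) := by
    have heq : (fun n : ℕ => conjL B (fun i => g n * v i ^ e n))
        = fun n : ℕ => g n • (B * Matrix.diagonal v * B⁻¹) ^ e n := by
      funext n
      rw [myConj_pow hB]
      have : (fun i => g n * v i ^ e n) = g n • (fun i => v i ^ e n) := rfl
      rw [this, (conjL B).map_smul, conjL_apply]
    rw [heq] at hL
    simpa using hL
  exact hL'.tsum_eq

private lemma key (c : ℝ) (hc : c ≠ 0) :
    Tendsto (fun m : ℕ => (m : ℝ) * Real.arcsin ((c / m) * Real.sqrt (1 - (c / m) ^ 2 / 4)))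
      atTop (𝓝 c) := by
  have h1 : Tendsto (fun m : ℕ => c / (m : ℝ)) atTop (𝓝 0) :=
    tendsto_const_div_atTop_nhds_zero_nat c
  have hq : Tendsto (fun m : ℕ => 1 - (c / (m:ℝ)) ^ 2 / 4) atTop (𝓝 1) := by
    have h2 := (h1.pow 2).div_const 4
    simpa using tendsto_const_nhds.sub h2
  have hs : Tendsto (fun m : ℕ => Real.sqrt (1 - (c / (m:ℝ)) ^ 2 / 4)) atTop (𝓝 1) := by
    have := (Real.continuous_sqrt.tendsto 1).comp hq
    rw [Real.sqrt_one] at this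
    exact this
  set x : ℕ → ℝ := fun m => (c / (m:ℝ)) * Real.sqrt (1 - (c / (m:ℝ)) ^ 2 / 4) with hxdef
  have hx0 : Tendsto x atTop (𝓝 0) := by simpa using h1.mul hs
  have hpos : ∀ᶠ m : ℕ in atTop, (0:ℝ) < 1 - (c / (m:ℝ)) ^ 2 / 4 :=
    hq.eventually (eventually_gt_nhds zero_lt_one)
  have hxne : ∀ᶠ m : ℕ in atTop, x m ≠ 0 := by
    filter_upwards [eventually_ge_atTop 1, hpos] with m hm hp
    have hmne : (m : ℝ) ≠ 0 := Nat.cast_ne_zero.mpr (by omega)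
    exact mul_ne_zero (div_ne_zero hc hmne) (Real.sqrt_pos.mpr hp).ne'
  have hd : HasDerivAt Real.arcsin 1 0 := by
    have := Real.hasDerivAt_arcsin (by norm_num : (0:ℝ) ≠ -1) (by norm_num : (0:ℝ) ≠ 1)
    simpa using this
  have hslope := hasDerivAt_iff_tendsto_slope.mp hd
  have hxw : Tendsto x atTop (𝓝[≠] (0:ℝ)) :=
    tendsto_nhdsWithin_of_tendsto_nhds_of_eventually_within x hx0
      (hxne.mono fun m h => Set.mem_compl_singleton_iff.mpr h)
  have harc : Tendsto (fun m : ℕ => Real.arcsin (x m) / x m) atTop (𝓝 1) := by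
    have h3 := hslope.comp hxw
    exact h3.congr fun m => by simp [slope_def_field]
  have hmx : Tendsto (fun m : ℕ => (m : ℝ) * x m) atTop (𝓝 c) := by
    have h2 : Tendsto (fun m : ℕ => c * Real.sqrt (1 - (c / (m:ℝ)) ^ 2 / 4)) atTop (𝓝 c) := by
      simpa using hs.const_mul c
    refine h2.congr' ?_
    filter_upwards [eventually_ge_atTop 1] with m hm
    have hmne : (m : ℝ) ≠ 0 := Nat.cast_ne_zero.mpr (by omega)
    simp only [hxdef]
    field_simp
  have final := harc.mul hmx
  rw [one_mul] at final
  refine final.congr' ?_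
  filter_upwards [hxne] with m hxm
  field_simp
  simp only [hxdef]
  ring_nf

lemma msinR_conj {d : ℕ} {B : Matrix (Fin d) (Fin d) ℝ} (hB : IsUnit B.det) (v : Fin d → ℝ) :
    msinR (B * Matrix.diagonal v * B⁻¹)
      = B * Matrix.diagonal (fun i => Real.sin (v i)) * B⁻¹ := by
  unfold msinR
  refine conj_tsum hB v _ _ Real.sin fun x => ?_
  have h0 := Real.hasSum_sin x
  rw [show (fun n : ℕ => ((-1:ℝ) ^ n / ((2 * n + 1).factorial : ℝ)) * x ^ (2 * n + 1))
      = (fun n : ℕ => (-1:ℝ) ^ n * x ^ (2 * n + 1) / ((2 * n + 1).factorial : ℝ)) from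
    funext fun n => div_mul_eq_mul_div _ _ _]
  exact h0

lemma mcosR_conj {d : ℕ} {B : Matrix (Fin d) (Fin d) ℝ} (hB : IsUnit B.det) (v : Fin d → ℝ) :
    mcosR (B * Matrix.diagonal v * B⁻¹)
      = B * Matrix.diagonal (fun i => Real.cos (v i)) * B⁻¹ := by
  unfold mcosR
  refine conj_tsum hB v _ _ Real.cos fun x => ?_
  have h0 := Real.hasSum_cos x
  rw [show (fun n : ℕ => ((-1:ℝ) ^ n / ((2 * n).factorial : ℝ)) * x ^ (2 * n))
      = (fun n : ℕ => (-1:ℝ) ^ n * x ^ (2 * n) / ((2 * n).factorial : ℝ)) from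
    funext fun n => div_mul_eq_mul_div _ _ _]
  exact h0

theorem stmt17 (d : ℕ) (a b r : ℝ) (hab : a < b) (hr : r ≠ 0)
    (Ω B : Matrix (Fin d) (Fin d) ℝ) (ω : Fin d → ℝ)
    (hB : IsUnit B.det) (hΩ : Ω = B * Matrix.diagonal ω * B⁻¹)
    (hω : ∀ i, ω i ≠ 0)
    (hsin : IsUnit (msinR (((b - a) / (2 * r)) • Ω)).det) :
    let Θ : ℝ → Matrix (Fin d) (Fin d) ℝ := fun ε =>
      B * Matrix.diagonal (fun i =>
        Real.arcsin ((ε / r) * ω i * Real.sqrt (1 - ε ^ 2 * (ω i) ^ 2 / (4 * r ^ 2)))) * B⁻¹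
    Tendsto
        (fun m : ℕ =>
          mcosR ((m : ℝ) • Θ ((b - a) / (2 * (m : ℝ))))
            * (msinR ((m : ℝ) • Θ ((b - a) / (2 * (m : ℝ)))))⁻¹)
        atTop
        (𝓝 (mcosR (((b - a) / (2 * r)) • Ω) * (msinR (((b - a) / (2 * r)) • Ω))⁻¹))
    ∧ Tendsto
        (fun m : ℕ => (msinR ((m : ℝ) • Θ ((b - a) / (2 * (m : ℝ)))))⁻¹)
        atTop
        (𝓝 ((msinR (((b - a) / (2 * r)) • Ω))⁻¹)) := by
  intro Θ
  set c : Fin d → ℝ := fun i => (b - a) / (2 * r) * ω i with hcdef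
  have hcne : ∀ i, c i ≠ 0 := fun i =>
    mul_ne_zero (div_ne_zero (sub_ne_zero.mpr hab.ne') (mul_ne_zero two_ne_zero hr)) (hω i)
  have hΩrep : ((b - a) / (2 * r)) • Ω = B * Matrix.diagonal c * B⁻¹ := by
    rw [hΩ, ← conjL_apply, ← (conjL B).map_smul, conjL_apply]
    rfl
  set u : ℕ → Fin d → ℝ := fun m i =>
    (m : ℝ) * Real.arcsin (((b - a) / (2 * (m : ℝ))) / r * ω i *
      Real.sqrt (1 - ((b - a) / (2 * (m : ℝ))) ^ 2 * (ω i) ^ 2 / (4 * r ^ 2))) with hudef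
  have hΘrep : ∀ m : ℕ, (m : ℝ) • Θ ((b - a) / (2 * (m : ℝ)))
      = B * Matrix.diagonal (u m) * B⁻¹ := by
    intro m
    simp only [Θ]
    rw [← conjL_apply, ← (conjL B).map_smul, conjL_apply]
    rfl
  have hu : Tendsto u atTop (𝓝 c) := by
    rw [tendsto_pi_nhds]
    intro i
    refine (key (c i) (hcne i)).congr' ?_
    filter_upwards [eventually_ge_atTop 1] with m hm
    have hmne : (m : ℝ) ≠ 0 := Nat.cast_ne_zero.mpr (by omega)
    have h2 : (c i / (m : ℝ)) ^ 2 / 4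
        = ((b - a) / (2 * (m : ℝ))) ^ 2 * (ω i) ^ 2 / (4 * r ^ 2) := by
      simp only [hcdef]
      field_simp
    have h1 : c i / (m : ℝ) = ((b - a) / (2 * (m : ℝ))) / r * ω i := by
      simp only [hcdef]
      field_simp
    simp only [hudef]
    rw [h2, h1]
  have hlim_sin : msinR (((b - a) / (2 * r)) • Ω) = conjL B (fun i => Real.sin (c i)) := by
    rw [hΩrep, msinR_conj hB, conjL_apply]
  have hlim_cos : mcosR (((b - a) / (2 * r)) • Ω) = conjL B (fun i => Real.cos (c i)) := by
    rw [hΩrep, mcosR_conj hB, conjL_apply]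
  have hsin_t : Tendsto (fun m : ℕ => msinR ((m : ℝ) • Θ ((b - a) / (2 * (m : ℝ))))) atTop
      (𝓝 (msinR (((b - a) / (2 * r)) • Ω))) := by
    have hcont : Continuous fun v : Fin d → ℝ => conjL B (fun i => Real.sin (v i)) :=
      (conjL B).continuous.comp (continuous_pi fun i => Real.continuous_sin.comp (continuous_apply i))
    have h := (hcont.tendsto c).comp hu
    rw [hlim_sin]
    exact h.congr fun m => by rw [Function.comp_apply, hΘrep m, msinR_conj hB, conjL_apply]
  have hcos_t : Tendsto (fun m : ℕ => mcosR ((m : ℝ) • Θ ((b - a) / (2 * (m : ℝ))))) atTop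
      (𝓝 (mcosR (((b - a) / (2 * r)) • Ω))) := by
    have hcont : Continuous fun v : Fin d → ℝ => conjL B (fun i => Real.cos (v i)) :=
      (conjL B).continuous.comp (continuous_pi fun i => Real.continuous_cos.comp (continuous_apply i))
    have h := (hcont.tendsto c).comp hu
    rw [hlim_cos]
    exact h.congr fun m => by rw [Function.comp_apply, hΘrep m, mcosR_conj hB, conjL_apply]
  have hdet : (msinR (((b - a) / (2 * r)) • Ω)).det ≠ 0 := by
    simpa [isUnit_iff_ne_zero] using hsin
  have hinvc : ContinuousAt Inv.inv (msinR (((b - a) / (2 * r)) • Ω)) := by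
    refine continuousAt_matrix_inv _ ?_
    have h := continuousAt_inv₀ hdet
    simpa [Ring.inverse_eq_inv'] using h
  have hinv_t : Tendsto (fun m : ℕ => (msinR ((m : ℝ) • Θ ((b - a) / (2 * (m : ℝ)))))⁻¹) atTop
      (𝓝 ((msinR (((b - a) / (2 * r)) • Ω))⁻¹)) := hinvc.tendsto.comp hsin_t
  exact ⟨hcos_t.mul hinv_t, hinv_t⟩
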